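/- Discrete nonlocal phase-field equation (variation of the fracture functional with respect to the phase field, Eq. (92)): in the discrete nonlocal setting, let g : I × I → ℝ^d, ω : I × I → ℝ, fixed tensile strain-energy values ψ⁺ : I → ℝ, a critical energy release rate g_c > 0 and a length scale ℓ > 0. For a phase field s : I → ℝ define the nonlocal gradient ∇̃s_i := ∑_{j∈S(i)} ω(i,j)·(s(j)−s(i))·g(i,j)·V(j) ∈ ℝ^d and the functional 𝓕(s) := ∑_{i∈I} ( (1−s(i))²·ψ⁺(i) + g_c·( s(i)²/(2ℓ) + (ℓ/2)·⟪∇̃s_i, ∇̃s_i⟫ ) )·V(i). Then for every variation δ : I → ℝ, (d/dt)𝓕(s + t·δ)|_{t=0} = ∑_{i∈I} ( −2·(1−s(i))·ψ⁺(i) + g_c·s(i)/ℓ + g_c·ℓ·( ∑_{j∈S'(i)} ω(j,i)·⟪∇̃s_j, g(j,i)⟫·V(j) − ∑_{j∈S(i)} ω(i,j)·⟪∇̃s_i, g(i,j)⟫·V(j) ) )·δ(i)·V(i). Consequently s is a critical point if and only if for every i: s(i)/ℓ − 2·(ψ⁺(i)/g_c)·(1−s(i)) + ∑_{j∈S'(i)}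 ω(j,i)·ℓ·⟪∇̃s_j, g(j,i)⟫·V(j) − ∑_{j∈S(i)} ω(i,j)·ℓ·⟪∇̃s_i, g(i,j)⟫·V(j) = 0. -/

import Mathlib

open Finset Matrix

private lemma quadDeriv (P Q R : ℝ) : HasDerivAt (fun t : ℝ => P + Q * t + R * t ^ 2) Q 0 := by
  have h1 : HasDerivAt (fun t : ℝ => Q * t) Q 0 := by
    simpa using (hasDerivAt_id (0:ℝ)).const_mul Q
  have h2 : HasDerivAt (fun t : ℝ => R * t ^ 2) 0 0 := by
    simpa using (hasDerivAt_pow 2 (0:ℝ)).const_mul R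
  simpa using ((hasDerivAt_const (0:ℝ) P).fun_add h1).fun_add h2

/-- Discrete nonlocal phase-field equation: variation of the fracture functional
with respect to the phase field (Eq. (92)). -/
theorem nonlocal_phase_field_variational {I : Type*} [Fintype I] [DecidableEq I] {d : ℕ}
    (V : I → ℝ) (hV : ∀ i, 0 < V i)
    (S : I → Finset I)
    (g : I → I → Fin d → ℝ) (ω : I → I → ℝ)
    (ψp : I → ℝ) (gc ℓ : ℝ) (hgc : 0 < gc) (hℓ : 0 < ℓ)
    (grad : (I → ℝ) → I → Fin d → ℝ)
    (hgrad : ∀ s i, grad s i = ∑ j ∈ S i, (ω i j * (s j - s i) * V j) • g i j)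
    (F : (I → ℝ) → ℝ)
    (hF : ∀ s, F s = ∑ i, ((1 - s i) ^ 2 * ψp i
        + gc * (s i ^ 2 / (2 * ℓ) + (ℓ / 2) * (grad s i ⬝ᵥ grad s i))) * V i)
    (s : I → ℝ) :
    (∀ δ : I → ℝ,
        HasDerivAt (fun t : ℝ => F (s + t • δ))
          (∑ i, (-2 * (1 - s i) * ψp i + gc * s i / ℓ
            + gc * ℓ * ((∑ j ∈ univ.filter (fun j => i ∈ S j),
                  ω j i * (grad s j ⬝ᵥ g j i) * V j)
              - ∑ j ∈ S i, ω i j * (grad s i ⬝ᵥ g i j) * V j)) * δ i * V i) 0)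
    ∧ ((∀ δ : I → ℝ, deriv (fun t : ℝ => F (s + t • δ)) 0 = 0)
        ↔ ∀ i, s i / ℓ - 2 * (ψp i / gc) * (1 - s i)
              + (∑ j ∈ univ.filter (fun j => i ∈ S j),
                  ω j i * ℓ * (grad s j ⬝ᵥ g j i) * V j)
              - (∑ j ∈ S i, ω i j * ℓ * (grad s i ⬝ᵥ g i j) * V j) = 0) := by
  -- coefficient of δ i * V i in the first variation
  set T1 : I → ℝ := fun i => ∑ j ∈ univ.filter (fun j => i ∈ S j),
      ω j i * (grad s j ⬝ᵥ g j i) * V j with hT1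
  set T2 : I → ℝ := fun i => ∑ j ∈ S i, ω i j * (grad s i ⬝ᵥ g i j) * V j with hT2
  set c : I → ℝ := fun i => -2 * (1 - s i) * ψp i + gc * s i / ℓ + gc * ℓ * (T1 i - T2 i)
    with hc
  -- linearity of grad
  have gradlin : ∀ (t : ℝ) (δ : I → ℝ) (i : I),
      grad (s + t • δ) i = grad s i + t • grad δ i := by
    intro t δ i
    rw [hgrad, hgrad, hgrad, Finset.smul_sum, ← Finset.sum_add_distrib]
    refine Finset.sum_congr rfl fun j hj => ?_
    rw [smul_smul, ← add_smul]
    congr 1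
    simp only [Pi.add_apply, Pi.smul_apply, smul_eq_mul]
    ring
  -- summation by parts
  have key : ∀ δ : I → ℝ, ∑ i, (grad s i ⬝ᵥ grad δ i) * V i
      = ∑ i, (T1 i - T2 i) * δ i * V i := by
    intro δ
    have expand : ∀ i, (grad s i ⬝ᵥ grad δ i)
        = ∑ j ∈ S i, ω i j * (δ j - δ i) * V j * (grad s i ⬝ᵥ g i j) := by
      intro i
      rw [hgrad δ]
      have dot_sum : ∀ (v : Fin d → ℝ) (t : Finset I) (f : I → Fin d → ℝ),
          v ⬝ᵥ (∑ j ∈ t, f j) = ∑ j ∈ t, v ⬝ᵥ f j := by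
        intro v t f
        simp only [dotProduct, Finset.sum_apply, Finset.mul_sum]
        rw [Finset.sum_comm]
      rw [dot_sum]
      refine Finset.sum_congr rfl fun j hj => ?_
      rw [dotProduct_smul, smul_eq_mul]
    calc ∑ i, (grad s i ⬝ᵥ grad δ i) * V i
        = ∑ i, ∑ j ∈ S i, (ω i j * (grad s i ⬝ᵥ g i j) * V j * V i) * δ j
          - ∑ i, (∑ j ∈ S i, ω i j * (grad s i ⬝ᵥ g i j) * V j) * δ i * V i := by
          rw [← Finset.sum_sub_distrib]
          refine Finset.sum_congr rfl fun i _ => ?_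
          rw [expand, Finset.sum_mul, Finset.sum_mul, Finset.sum_mul, ← Finset.sum_sub_distrib]
          refine Finset.sum_congr rfl fun j hj => ?_
          ring
      _ = ∑ i, (T1 i) * δ i * V i - ∑ i, (T2 i) * δ i * V i := by
          congr 1
          calc ∑ i, ∑ j ∈ S i, (ω i j * (grad s i ⬝ᵥ g i j) * V j * V i) * δ j
              = ∑ i, ∑ j, if j ∈ S i then (ω i j * (grad s i ⬝ᵥ g i j) * V j * V i) * δ j
                  else 0 := by
                refine Finset.sum_congr rfl fun i _ => ?_
                rw [Finset.sum_ite_mem, Finset.univ_inter]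
            _ = ∑ j, ∑ i, if j ∈ S i then (ω i j * (grad s i ⬝ᵥ g i j) * V j * V i) * δ j
                  else 0 := Finset.sum_comm
            _ = ∑ i, (T1 i) * δ i * V i := by
                refine Finset.sum_congr rfl fun j _ => ?_
                rw [hT1, Finset.sum_mul, Finset.sum_mul, Finset.sum_filter]
                refine Finset.sum_congr rfl fun i _ => ?_
                split <;> ring
      _ = ∑ i, (T1 i - T2 i) * δ i * V i := by
          rw [← Finset.sum_sub_distrib]
          refine Finset.sum_congr rfl fun i _ => ?_
          ring
  -- the first variation
  have part1 : ∀ δ : I → ℝ,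
      HasDerivAt (fun t : ℝ => F (s + t • δ)) (∑ i, c i * δ i * V i) 0 := by
    intro δ
    have hsum : ∑ i, c i * δ i * V i
        = ∑ i, ((-2 * (1 - s i) * δ i * ψp i
            + gc * (s i * δ i / ℓ + ℓ * (grad s i ⬝ᵥ grad δ i))) * V i) := by
      have h1 : ∑ i, c i * δ i * V i
          = ∑ i, ((-2 * (1 - s i) * ψp i + gc * s i / ℓ) * δ i * V i)
            + gc * ℓ * ∑ i, (T1 i - T2 i) * δ i * V i := by
        rw [Finset.mul_sum, ← Finset.sum_add_distrib]
        refine Finset.sum_congr rfl fun i _ => ?_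
        rw [hc]; ring
      rw [h1, ← key, Finset.mul_sum, ← Finset.sum_add_distrib]
      refine Finset.sum_congr rfl fun i _ => ?_
      ring
    rw [hsum]
    have hFfun : (fun t : ℝ => F (s + t • δ))
        = fun t : ℝ => ∑ i, (((1 - s i) ^ 2 * ψp i
            + gc * (s i ^ 2 / (2 * ℓ)
              + (ℓ / 2) * (grad s i ⬝ᵥ grad s i)) ) * V i
          + ((-2 * (1 - s i) * δ i * ψp i
            + gc * (s i * δ i / ℓ + ℓ * (grad s i ⬝ᵥ grad δ i))) * V i) * t
          + ((δ i ^ 2 * ψp i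
            + gc * (δ i ^ 2 / (2 * ℓ)
              + (ℓ / 2) * (grad δ i ⬝ᵥ grad δ i))) * V i) * t ^ 2) := by
      funext t
      rw [hF]
      refine Finset.sum_congr rfl fun i _ => ?_
      have hg := gradlin t δ i
      have hdot : grad (s + t • δ) i ⬝ᵥ grad (s + t • δ) i
          = (grad s i ⬝ᵥ grad s i) + 2 * (grad s i ⬝ᵥ grad δ i) * t
            + (grad δ i ⬝ᵥ grad δ i) * t ^ 2 := by
        rw [hg, add_dotProduct, dotProduct_add, dotProduct_add,
          smul_dotProduct, dotProduct_smul, dotProduct_smul,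
          smul_dotProduct, dotProduct_comm (grad δ i) (grad s i)]
        simp only [smul_eq_mul]
        ring
      have hsi : (s + t • δ) i = s i + t * δ i := by
        simp [Pi.add_apply, Pi.smul_apply, smul_eq_mul]
      rw [hdot, hsi]
      ring
    rw [hFfun]
    refine HasDerivAt.fun_sum fun i _ => ?_
    exact quadDeriv _ _ _
  refine ⟨part1, ?_⟩
  -- relation between c and the Euler–Lagrange expression
  have hcE : ∀ i, c i = gc * (s i / ℓ - 2 * (ψp i / gc) * (1 - s i)
      + (∑ j ∈ univ.filter (fun j => i ∈ S j), ω j i * ℓ * (grad s j ⬝ᵥ g j i) * V j)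
      - (∑ j ∈ S i, ω i j * ℓ * (grad s i ⬝ᵥ g i j) * V j)) := by
    intro i
    have e1 : ∑ j ∈ univ.filter (fun j => i ∈ S j), ω j i * ℓ * (grad s j ⬝ᵥ g j i) * V j
        = ℓ * T1 i := by
      rw [hT1, Finset.mul_sum]
      exact Finset.sum_congr rfl fun j _ => by ring
    have e2 : ∑ j ∈ S i, ω i j * ℓ * (grad s i ⬝ᵥ g i j) * V j = ℓ * T2 i := by
      rw [hT2, Finset.mul_sum]
      exact Finset.sum_congr rfl fun j _ => by ring
    rw [e1, e2, hc]
    field_simp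
    ring
  have hderiv : ∀ δ : I → ℝ, deriv (fun t : ℝ => F (s + t • δ)) 0
      = ∑ i, c i * δ i * V i := fun δ => (part1 δ).deriv
  constructor
  · intro h i
    have h0 := h (fun j => if j = i then (1:ℝ) else 0)
    rw [hderiv] at h0
    have hcoll : ∑ j, c j * (if j = i then (1:ℝ) else 0) * V j = c i * V i := by
      rw [Finset.sum_eq_single i]
      · simp
      · intro b _ hb; simp [hb]
      · intro hi; exact absurd (Finset.mem_univ i) hi
    rw [hcoll] at h0
    have hci : c i = 0 := by
      rcases mul_eq_zero.mp h0 with h' | h'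
      · exact h'
      · exact absurd h' (hV i).ne'
    rw [hcE i] at hci
    rcases mul_eq_zero.mp hci with h' | h'
    · exact absurd h' hgc.ne'
    · exact h'
  · intro h δ
    rw [hderiv]
    refine Finset.sum_eq_zero fun i _ => ?_
    rw [hcE i, h i, mul_zero, zero_mul, zero_mul]
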